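/- For every k, l ∈ ℕ₀ and n ∈ ℕ, the number of matchings on [2n] with exactly k crossings and exactly l nestings equals the number of matchings on [2n] with exactly l crossings and exactly k nestings; that is, the joint statistic (cr, ne) on M(n) is symmetric. -/

import Mathlib

/-- Number of crossings of a matching given by its set of edges `(a, b)` with `a < b`:
unordered pairs of edges `e, f` with `min e < min f < max e < max f`. -/
def crStat (s : Finset (ℕ × ℕ)) : ℕ :=
  ((s ×ˢ s).filter fun p => p.1.1 < p.2.1 ∧ p.2.1 < p.1.2 ∧ p.1.2 < p.2.2).card

/-- Number of nestings: unordered pairs of edges `e, f` with `min e < min f < max f < max e`. -/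
def neStat (s : Finset (ℕ × ℕ)) : ℕ :=
  ((s ×ˢ s).filter fun p => p.1.1 < p.2.1 ∧ p.2.2 < p.1.2).card

/-- Number of camels (separated pairs): unordered pairs of edges `e, f` with `max e < min f`. -/
def caStat (s : Finset (ℕ × ℕ)) : ℕ :=
  ((s ×ˢ s).filter fun p => p.1.2 < p.2.1).card

/-- `s` is the edge set of a matching on `[2n] = {1, …, 2n}`: `n` edges `(a, b)` with
`a < b`, and every vertex of `[2n]` belongs to exactly one edge. -/
def IsMatching (n : ℕ) (s : Finset (ℕ × ℕ)) : Prop :=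
  s.card = n ∧
  (∀ e ∈ s, e.1 < e.2 ∧ 1 ≤ e.1 ∧ e.2 ≤ 2 * n) ∧
  (∀ v : ℕ, 1 ≤ v → v ≤ 2 * n → ∃! e, e ∈ s ∧ (v = e.1 ∨ v = e.2))

/-- The order isomorphism `[2n] → {2, …, 2n+2} \ {x}`. -/
def shiftV (x v : ℕ) : ℕ := if v + 1 < x then v + 1 else v + 2

/-- The matching on `[2n+2]` obtained from a matching on `[2n]` by relabeling its vertices
order-isomorphically as `{2, …, 2n+2} \ {x}` and adding the new first edge `{1, x}`. -/
def addFirst (x : ℕ) (s : Finset (ℕ × ℕ)) : Finset (ℕ × ℕ) :=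
  insert (1, x) (s.image fun e => (shiftV x e.1, shiftV x e.2))

/-- All matchings obtained from `s` by adding a new first edge in all possible ways. -/
def childrenM (s : Finset (ℕ × ℕ)) : Multiset (Finset (ℕ × ℕ)) :=
  (Finset.Icc 2 (2 * s.card + 2)).val.map fun x => addFirst x s

/-- `levelM s l` is the multiset `T(s, l)` of matchings obtained from `s` by `l` successive
additions of a new first edge in all possible ways. -/
def levelM (s : Finset (ℕ × ℕ)) : ℕ → Multiset (Finset (ℕ × ℕ))
  | 0 => {s}
  | l + 1 => (levelM s l).bind childrenM

section FlipAux
open Finset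

lemma sorted_filter_le_take (L : List ℕ) (hL : L.Pairwise (· < ·)) :
    ∀ i (h : i < L.length), L.filter (fun a => a ≤ L.get ⟨i, h⟩) = L.take (i + 1) := by
  induction L with
  | nil => intro i h; simp at h
  | cons x xs ih =>
    rcases List.pairwise_cons.1 hL with ⟨hx, hxs⟩
    intro i h
    cases i with
    | zero =>
      have h1 : (x :: xs).get ⟨0, h⟩ = x := rfl
      rw [h1, List.filter_cons_of_pos (by simp)]
      have hnil : xs.filter (fun a => decide (a ≤ x)) = [] := by
        apply List.filter_eq_nil_iff.2
        intro a ha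
        simpa using (hx a ha).not_ge
      simp [hnil]
    | succ i =>
      have h' : i < xs.length := by simpa using h
      have h1 : (x :: xs).get ⟨i+1, h⟩ = xs.get ⟨i, h'⟩ := rfl
      rw [h1, List.filter_cons_of_pos (by simp; exact (hx _ (xs.get_mem _)).le),
        List.take_cons (by omega), ih hxs i h']
      simp

def pick (A : Finset ℕ) (j : ℕ) : ℕ := (A.sort (· ≤ ·)).getD (j - 1) 0

lemma card_filter_eq_length_filter (A : Finset ℕ) (p : ℕ → Prop) [DecidablePred p] :
    (A.filter p).card = ((A.sort (· ≤ ·)).filter (fun a => p a)).length := by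
  have hperm : (A.sort (· ≤ ·)).Perm A.toList := Finset.sort_perm_toList A (· ≤ ·)
  rw [(hperm.filter (fun a => decide (p a))).length_eq]
  have h3 : ((A.toList.filter fun a => decide (p a)) : Multiset ℕ) = (A.filter p).val := by
    rw [Finset.filter_val, ← Multiset.filter_coe, Finset.coe_toList]
  have hlen := congrArg Multiset.card h3
  simp only [Multiset.coe_card] at hlen
  rw [← Finset.card_def] at hlen
  exact hlen.symm

lemma pick_mem (A : Finset ℕ) (j : ℕ) (h1 : 1 ≤ j) (h2 : j ≤ A.card) : pick A j ∈ A := by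
  have hl : j - 1 < (A.sort (· ≤ ·)).length := by rw [Finset.length_sort]; omega
  have : pick A j = (A.sort (· ≤ ·)).get ⟨j-1, hl⟩ := List.getD_eq_getElem _ _ hl
  rw [this]
  exact (Finset.mem_sort (· ≤ ·)).1 (List.get_mem _ _)

lemma pick_rank (A : Finset ℕ) (j : ℕ) (h1 : 1 ≤ j) (h2 : j ≤ A.card) :
    (A.filter (· ≤ pick A j)).card = j := by
  have hl : j - 1 < (A.sort (· ≤ ·)).length := by rw [Finset.length_sort]; omega
  have hp : pick A j = (A.sort (· ≤ ·)).get ⟨j-1, hl⟩ := List.getD_eq_getElem _ _ hl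
  rw [card_filter_eq_length_filter, hp,
    sorted_filter_le_take _ (Finset.sortedLT_sort A).pairwise (j-1) hl,
    List.length_take]
  rw [Finset.length_sort]
  omega

lemma pick_of_rank (A : Finset ℕ) (o : ℕ) (ho : o ∈ A) :
    pick A ((A.filter (· ≤ o)).card) = o := by
  have hmem : o ∈ A.sort (· ≤ ·) := (Finset.mem_sort _).2 ho
  obtain ⟨i, hget⟩ := List.mem_iff_get.1 hmem
  rw [← hget, card_filter_eq_length_filter,
    sorted_filter_le_take _ (Finset.sortedLT_sort A).pairwise i i.isLt, List.length_take]
  have hmin : min ((i : ℕ) + 1) (A.sort (· ≤ ·)).length = (i : ℕ) + 1 := by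
    have := i.isLt; omega
  rw [hmin, pick]
  simp only [Nat.add_sub_cancel]
  rw [List.getD_eq_getElem _ _ (by exact i.isLt)]
  simp


def openAt (s : Finset (ℕ × ℕ)) (v : ℕ) : Finset ℕ :=
  (s.filter fun e => e.1 < v ∧ v ≤ e.2).image Prod.fst
def opFn (s : Finset (ℕ × ℕ)) (v : ℕ) : ℕ := (s.filter fun e => e.2 = v).sup fun e => e.1
def hF (s : Finset (ℕ × ℕ)) (v : ℕ) : ℕ := (openAt s v).card
def rankF (s : Finset (ℕ × ℕ)) (v : ℕ) : ℕ := ((openAt s v).filter (· ≤ opFn s v)).card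

structure PM (s : Finset (ℕ × ℕ)) : Prop where
  lt : ∀ e ∈ s, e.1 < e.2
  injFst : ∀ e ∈ s, ∀ f ∈ s, e.1 = f.1 → e = f
  injSnd : ∀ e ∈ s, ∀ f ∈ s, e.2 = f.2 → e = f
  cross : ∀ e ∈ s, ∀ f ∈ s, e.1 ≠ f.2

lemma PM.mono {s t : Finset (ℕ × ℕ)} (hts : t ⊆ s) (h : PM s) : PM t :=
  ⟨fun e he => h.lt e (hts he), fun e he f hf => h.injFst e (hts he) f (hts hf),
   fun e he f hf => h.injSnd e (hts he) f (hts hf), fun e he f hf => h.cross e (hts he) f (hts hf)⟩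

lemma filter_snd_eq {s : Finset (ℕ × ℕ)} (h : PM s) {e : ℕ × ℕ} (he : e ∈ s) :
    s.filter (fun f => f.2 = e.2) = {e} := by
  ext f
  simp only [mem_filter, mem_singleton]
  constructor
  · rintro ⟨hf, hf2⟩; exact h.injSnd f hf e he hf2
  · rintro rfl; exact ⟨he, rfl⟩

lemma opFn_eq {s : Finset (ℕ × ℕ)} (h : PM s) {e : ℕ × ℕ} (he : e ∈ s) :
    opFn s e.2 = e.1 := by rw [opFn, filter_snd_eq h he]; simp

lemma mem_openAt_self {s : Finset (ℕ × ℕ)} (h : PM s) {e : ℕ × ℕ} (he : e ∈ s) :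
    e.1 ∈ openAt s e.2 := by
  apply Finset.mem_image.2
  exact ⟨e, Finset.mem_filter.2 ⟨he, h.lt e he, le_rfl⟩, rfl⟩

lemma rankF_pos {s : Finset (ℕ × ℕ)} (h : PM s) {e : ℕ × ℕ} (he : e ∈ s) :
    1 ≤ rankF s e.2 := by
  rw [rankF, opFn_eq h he]
  exact Finset.card_pos.2 ⟨e.1, Finset.mem_filter.2 ⟨mem_openAt_self h he, le_rfl⟩⟩

lemma rankF_le {s : Finset (ℕ × ℕ)} (v : ℕ) : rankF s v ≤ hF s v :=
  Finset.card_filter_le _ _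

-- image fst of the crossing-partners filter
lemma cr_partner_image {s : Finset (ℕ × ℕ)} (h : PM s) {e : ℕ × ℕ} (he : e ∈ s) :
    (s.filter fun f => e.1 < f.1 ∧ f.1 < e.2 ∧ e.2 < f.2).image Prod.fst
      = (openAt s e.2).filter (fun a => e.1 < a) := by
  ext a
  simp only [Finset.mem_image, Finset.mem_filter, openAt]
  constructor
  · rintro ⟨f, ⟨hf, h1, h2, h3⟩, rfl⟩
    exact ⟨⟨f, ⟨hf, h2, h3.le⟩, rfl⟩, h1⟩
  · rintro ⟨⟨f, ⟨hf, h2, h3⟩, rfl⟩, h1⟩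
    refine ⟨f, ⟨hf, h1, h2, lt_of_le_of_ne h3 ?_⟩, rfl⟩
    intro hEq
    exact absurd (congrArg Prod.fst (h.injSnd e he f hf hEq)).symm (ne_of_gt h1)
lemma ne_partner_image {s : Finset (ℕ × ℕ)} (h : PM s) {f : ℕ × ℕ} (hf : f ∈ s) :
    (s.filter fun e => e.1 < f.1 ∧ f.2 < e.2).image Prod.fst
      = (openAt s f.2).filter (fun a => a < f.1) := by
  ext a
  simp only [Finset.mem_image, Finset.mem_filter, openAt]
  constructor
  · rintro ⟨e, ⟨he, h1, h2⟩, rfl⟩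
    exact ⟨⟨e, ⟨he, h1.trans (h.lt f hf), h2.le⟩, rfl⟩, h1⟩
  · rintro ⟨⟨e, ⟨he, h2, h3⟩, rfl⟩, h1⟩
    refine ⟨e, ⟨he, h1, lt_of_le_of_ne h3 ?_⟩, rfl⟩
    intro hEq
    exact absurd (congrArg Prod.fst (h.injSnd f hf e he hEq)).symm (ne_of_lt h1)

lemma crStat_eq_sum {s : Finset (ℕ × ℕ)} (h : PM s) :
    crStat s = ∑ e ∈ s, (hF s e.2 - rankF s e.2) := by
  rw [crStat, Finset.card_eq_sum_card_fiberwise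
    (f := Prod.fst) (t := s) (fun p hp => (Finset.mem_product.1 (Finset.mem_filter.1 hp).1).1)]
  refine Finset.sum_congr rfl fun e he => ?_
  have himg : ((s ×ˢ s).filter (fun p => p.1.1 < p.2.1 ∧ p.2.1 < p.1.2 ∧ p.1.2 < p.2.2)).filter
      (fun p => p.1 = e) = (s.filter fun f => e.1 < f.1 ∧ f.1 < e.2 ∧ e.2 < f.2).image (fun f => (e, f)) := by
    ext p
    simp only [Finset.mem_filter, Finset.mem_product, Finset.mem_image]
    constructor
    · rintro ⟨⟨⟨hp1, hp2⟩, hc⟩, rfl⟩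
      exact ⟨p.2, ⟨hp2, hc⟩, rfl⟩
    · rintro ⟨f, ⟨hfs, hc⟩, rfl⟩
      exact ⟨⟨⟨he, hfs⟩, hc⟩, rfl⟩
  rw [himg, Finset.card_image_of_injective _ (fun a b hab => (Prod.mk.injEq _ _ _ _ ▸ congrArg Prod.snd hab)),
    ← Finset.card_image_of_injOn (f := Prod.fst)
      (fun x hx y hy hxy => h.injFst x (Finset.mem_filter.1 hx).1 y (Finset.mem_filter.1 hy).1 hxy),
    cr_partner_image h he]
  have hsplit := Finset.card_filter_add_card_filter_not
    (s := openAt s e.2) (p := fun a => a ≤ e.1)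
  have hrk : rankF s e.2 = ((openAt s e.2).filter (fun a => a ≤ e.1)).card := by
    rw [rankF, opFn_eq h he]
  have hcompl : (openAt s e.2).filter (fun a => ¬ a ≤ e.1) = (openAt s e.2).filter (fun a => e.1 < a) := by
    apply Finset.filter_congr; intro a _; simp
  rw [hcompl] at hsplit
  rw [← hF] at hsplit
  omega

lemma neStat_eq_sum {s : Finset (ℕ × ℕ)} (h : PM s) :
    neStat s = ∑ e ∈ s, (rankF s e.2 - 1) := by
  rw [neStat, Finset.card_eq_sum_card_fiberwise
    (f := Prod.snd) (t := s) (fun p hp => (Finset.mem_product.1 (Finset.mem_filter.1 hp).1).2)]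
  refine Finset.sum_congr rfl fun f hf => ?_
  have himg : ((s ×ˢ s).filter (fun p => p.1.1 < p.2.1 ∧ p.2.2 < p.1.2)).filter
      (fun p => p.2 = f) = (s.filter fun e => e.1 < f.1 ∧ f.2 < e.2).image (fun e => (e, f)) := by
    ext p
    simp only [Finset.mem_filter, Finset.mem_product, Finset.mem_image]
    constructor
    · rintro ⟨⟨⟨hp1, hp2⟩, hc⟩, rfl⟩
      exact ⟨p.1, ⟨hp1, hc⟩, rfl⟩
    · rintro ⟨e, ⟨hes, hc⟩, rfl⟩
      exact ⟨⟨⟨hes, hf⟩, hc⟩, rfl⟩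
  rw [himg, Finset.card_image_of_injective _ (fun a b hab => congrArg Prod.fst hab),
    ← Finset.card_image_of_injOn (f := Prod.fst)
      (fun x hx y hy hxy => h.injFst x (Finset.mem_filter.1 hx).1 y (Finset.mem_filter.1 hy).1 hxy),
    ne_partner_image h hf]
  have hins : (openAt s f.2).filter (fun a => a ≤ f.1)
      = insert f.1 ((openAt s f.2).filter (fun a => a < f.1)) := by
    ext a
    simp only [Finset.mem_filter, Finset.mem_insert]
    constructor
    · rintro ⟨ha, hle⟩
      rcases eq_or_lt_of_le hle with h1 | h1
      · exact Or.inl h1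
      · exact Or.inr ⟨ha, h1⟩
    · rintro (rfl | ⟨ha, hlt⟩)
      · exact ⟨mem_openAt_self h hf, le_rfl⟩
      · exact ⟨ha, hlt.le⟩
  have hnotmem : f.1 ∉ (openAt s f.2).filter (fun a => a < f.1) := by
    simp
  have hrk : rankF s f.2 = ((openAt s f.2).filter (fun a => a < f.1)).card + 1 := by
    rw [rankF, opFn_eq h hf, hins, Finset.card_insert_of_notMem hnotmem]
  omega

def openersF (s : Finset (ℕ × ℕ)) : Finset ℕ := s.image Prod.fst
def closersF (s : Finset (ℕ × ℕ)) : Finset ℕ := s.image Prod.snd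

lemma count_identity {s : Finset (ℕ × ℕ)} (h : PM s) (c : ℕ) :
    ((openersF s).filter (· < c)).card = hF s c + ((closersF s).filter (· < c)).card := by
  have hinjF : Set.InjOn Prod.fst (s : Set (ℕ × ℕ)) := fun x hx y hy hxy => h.injFst x hx y hy hxy
  have hinjS : Set.InjOn Prod.snd (s : Set (ℕ × ℕ)) := fun x hx y hy hxy => h.injSnd x hx y hy hxy
  have h1 : ((openersF s).filter (· < c)) = (s.filter fun e => e.1 < c).image Prod.fst := by
    rw [openersF, Finset.filter_image]
  have h2 : ((closersF s).filter (· < c)) = (s.filter fun e => e.2 < c).image Prod.snd := by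
    rw [closersF, Finset.filter_image]
  rw [h1, h2,
    Finset.card_image_of_injOn (hinjF.mono (by intro x hx; exact (Finset.mem_filter.1 hx).1)),
    Finset.card_image_of_injOn (hinjS.mono (by intro x hx; exact (Finset.mem_filter.1 hx).1))]
  have h3 : hF s c = ((s.filter fun e => e.1 < c).filter fun e => c ≤ e.2).card := by
    rw [hF, openAt, Finset.card_image_of_injOn (hinjF.mono (by intro x hx; exact (Finset.mem_filter.1 hx).1)),
      Finset.filter_filter]
  have h4 : ((s.filter fun e => e.1 < c).filter fun e => ¬ c ≤ e.2) = s.filter fun e => e.2 < c := by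
    rw [Finset.filter_filter]
    apply Finset.filter_congr
    intro e he
    have := h.lt e he
    constructor
    · rintro ⟨_, h2⟩; omega
    · intro h2; constructor <;> omega
  have h5 := Finset.card_filter_add_card_filter_not
    (s := s.filter fun e => e.1 < c) (p := fun e => c ≤ e.2)
  rw [h4] at h5
  omega

def rebuild : List ℕ → (ℕ → ℕ) → Finset ℕ → Finset (ℕ × ℕ)
  | [], _, _ => ∅
  | c :: cs, r, avail =>
    insert (pick (avail.filter (· < c)) (r c), c)
      (rebuild cs r (avail.erase (pick (avail.filter (· < c)) (r c))))

lemma rebuild_spec (cs : List ℕ) : ∀ (r : ℕ → ℕ) (avail : Finset ℕ),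
    cs.Pairwise (· < ·) → avail.card = cs.length → (∀ a ∈ avail, a ∉ cs) →
    (∀ c ∈ cs, 1 ≤ r c ∧ r c + (cs.filter (fun a => a < c)).length ≤ (avail.filter (· < c)).card) →
    PM (rebuild cs r avail) ∧
    (rebuild cs r avail).image Prod.fst = avail ∧
    (rebuild cs r avail).image Prod.snd = cs.toFinset ∧
    ∀ c ∈ cs, rankF (rebuild cs r avail) c = r c ∧
      hF (rebuild cs r avail) c
        = (avail.filter (· < c)).card - (cs.filter (fun a => a < c)).length := by
  induction cs with
  | nil =>
    intro r avail _ hcard _ _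
    have hav : avail = ∅ := Finset.card_eq_zero.1 (by simpa using hcard)
    subst hav
    refine ⟨⟨?_, ?_, ?_, ?_⟩, ?_, ?_, ?_⟩ <;> simp [rebuild]
  | cons c cs ih =>
    intro r avail hsort hcard hdisj hbnd
    rcases List.pairwise_cons.1 hsort with ⟨hc, hsort'⟩
    set A := avail.filter (· < c) with hA
    set o := pick A (r c) with ho
    obtain ⟨hr1, hr2⟩ := hbnd c (List.mem_cons_self)
    have hrA : r c ≤ A.card := le_trans (Nat.le_add_right _ _) hr2
    have hoA : o ∈ A := pick_mem A (r c) hr1 hrA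
    have hoav : o ∈ avail := (Finset.mem_filter.1 hoA).1
    have holt : o < c := (Finset.mem_filter.1 hoA).2
    have hcav : c ∉ avail := fun hcv => hdisj c hcv (List.mem_cons_self)
    -- hypotheses for the tail
    have hcard' : (avail.erase o).card = cs.length := by
      rw [Finset.card_erase_of_mem hoav]; simp at hcard ⊢; omega
    have hdisj' : ∀ a ∈ avail.erase o, a ∉ cs :=
      fun a ha hacs => hdisj a (Finset.mem_of_mem_erase ha) (List.mem_cons_of_mem c hacs)
    have hbnd' : ∀ c' ∈ cs, 1 ≤ r c' ∧
        r c' + (cs.filter (fun a => a < c')).length ≤ ((avail.erase o).filter (· < c')).card := by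
      intro c' hc'
      obtain ⟨g1, g2⟩ := hbnd c' (List.mem_cons_of_mem c hc')
      have hcc' : c < c' := hc c' hc'
      have hfe : (avail.erase o).filter (· < c') = (avail.filter (· < c')).erase o := by
        ext x; simp only [Finset.mem_filter, Finset.mem_erase]; tauto
      have homem : o ∈ avail.filter (· < c') := Finset.mem_filter.2 ⟨hoav, holt.trans hcc'⟩
      have hcardf : ((avail.erase o).filter (· < c')).card = (avail.filter (· < c')).card - 1 := by
        rw [hfe, Finset.card_erase_of_mem homem]
      have hlst : ((c :: cs).filter (fun a => a < c')).length
          = (cs.filter (fun a => a < c')).length + 1 := by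
        rw [List.filter_cons_of_pos (by simpa using hcc')]
        simp
      rw [hlst] at g2
      have hpos : 0 < (avail.filter (· < c')).card := Finset.card_pos.2 ⟨o, homem⟩
      refine ⟨g1, ?_⟩
      omega
    obtain ⟨hPM', himgF', himgS', hrk'⟩ := ih r (avail.erase o) hsort' hcard' hdisj' hbnd'
    set t' := rebuild cs r (avail.erase o) with ht'
    have hreb : rebuild (c :: cs) r avail = insert (o, c) t' := rfl
    -- membership facts about t'
    have hfst' : ∀ e ∈ t', e.1 ∈ avail.erase o := by
      intro e he; rw [← himgF']; exact Finset.mem_image_of_mem Prod.fst he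
    have hsnd' : ∀ e ∈ t', e.2 ∈ cs := by
      intro e he
      have := Finset.mem_image_of_mem Prod.snd he
      rw [himgS'] at this; exact List.mem_toFinset.1 this
    have hclt : ∀ e ∈ t', c < e.2 := fun e he => hc e.2 (hsnd' e he)
    have hoc_not : (o, c) ∉ t' := by
      intro hmem
      exact absurd (hclt _ hmem) (lt_irrefl c)
    -- PM of t
    have hPM : PM (insert (o, c) t') := by
      constructor
      · intro e he
        rcases Finset.mem_insert.1 he with rfl | he'
        · exact holt
        · exact hPM'.lt e he'
      · intro e he f hf hef
        rcases Finset.mem_insert.1 he with rfl | he' <;> rcases Finset.mem_insert.1 hf with rfl | hf'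
        · rfl
        · exact absurd (hef ▸ hfst' f hf') (by simp)
        · exact absurd (hef ▸ hfst' e he') (by simp)
        · exact hPM'.injFst e he' f hf' hef
      · intro e he f hf hef
        rcases Finset.mem_insert.1 he with rfl | he' <;> rcases Finset.mem_insert.1 hf with rfl | hf'
        · rfl
        · exact absurd (hef ▸ hclt f hf') (by simp)
        · exact absurd (hef ▸ hclt e he') (by simp [lt_irrefl]) 
        · exact hPM'.injSnd e he' f hf' hef
      · intro e he f hf
        rcases Finset.mem_insert.1 he with rfl | he' <;> rcases Finset.mem_insert.1 hf with rfl | hf'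
        · exact Nat.ne_of_lt holt
        · exact fun hEq => hdisj o hoav
            (by rw [show o = f.2 from hEq]; exact List.mem_cons_of_mem c (hsnd' f hf'))
        · exact fun hEq => hdisj e.1 (Finset.mem_of_mem_erase (hfst' e he'))
            (by rw [show e.1 = c from hEq]; exact List.mem_cons_self)
        · exact fun hEq => hdisj e.1 (Finset.mem_of_mem_erase (hfst' e he'))
            (by rw [show e.1 = f.2 from hEq]; exact List.mem_cons_of_mem c (hsnd' f hf'))
    refine ⟨hreb ▸ hPM, ?_, ?_, ?_⟩
    · rw [hreb, Finset.image_insert, himgF']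
      exact Finset.insert_erase hoav
    · rw [hreb, Finset.image_insert, himgS', List.toFinset_cons]
    · intro c' hc'
      rcases List.mem_cons.1 hc' with rfl | hc''
      · -- the head closer
        have hfilt : (insert (o, c') t').filter (fun e => e.1 < c' ∧ c' ≤ e.2)
            = insert (o, c') (t'.filter fun e => e.1 < c') := by
          ext e
          simp only [Finset.mem_filter, Finset.mem_insert]
          constructor
          · rintro ⟨rfl | he', h1, h2⟩
            · exact Or.inl rfl
            · exact Or.inr ⟨he', h1⟩
          · rintro (rfl | ⟨he2, h1⟩)
            · exact ⟨Or.inl rfl, holt, le_rfl⟩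
            · exact ⟨Or.inr he2, h1, (hclt e he2).le⟩
        have himg2 : (t'.filter fun e => e.1 < c').image Prod.fst
            = (avail.erase o).filter (· < c') := by
          ext a
          simp only [Finset.mem_image, Finset.mem_filter]
          constructor
          · rintro ⟨e, ⟨he, hlt⟩, rfl⟩
            exact ⟨hfst' e he, hlt⟩
          · rintro ⟨ha, hlt⟩
            have : a ∈ t'.image Prod.fst := by rw [himgF']; exact ha
            obtain ⟨e, he, rfl⟩ := Finset.mem_image.1 this
            exact ⟨e, ⟨he, hlt⟩, rfl⟩
        have herA : (avail.erase o).filter (· < c') = A.erase o := by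
          ext x; rw [hA]; simp only [Finset.mem_filter, Finset.mem_erase]; tauto
        have hopen : openAt (insert (o, c') t') c' = A := by
          rw [openAt, hfilt, Finset.image_insert, himg2, herA]
          exact Finset.insert_erase hoA
        have hopf : opFn (insert (o, c') t') c' = o := by
          have := opFn_eq hPM (Finset.mem_insert_self (o, c') t')
          simpa using this
        constructor
        · rw [hreb, rankF, hopen, hopf]
          exact pick_rank A (r c') hr1 hrA
        · rw [hreb, hF, hopen]
          have hnil : ((c' :: cs).filter (fun a => a < c')).length = 0 := by
            rw [List.filter_cons_of_neg (by simp)]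
            rw [List.filter_eq_nil_iff.2 (fun a ha => by simpa using (hc a ha).not_gt)]
            rfl
          rw [hnil, hA]
          omega
      · -- a tail closer
        have hcc' : c < c' := hc c' hc''
        have hfilt : (insert (o, c) t').filter (fun e => e.1 < c' ∧ c' ≤ e.2)
            = t'.filter (fun e => e.1 < c' ∧ c' ≤ e.2) := by
          rw [Finset.filter_insert, if_neg (by simp; omega)]
        have hopen : openAt (insert (o, c) t') c' = openAt t' c' := by
          rw [openAt, openAt, hfilt]
        have hopf : opFn (insert (o, c) t') c' = opFn t' c' := by
          rw [opFn, opFn, Finset.filter_insert, if_neg (by simp; omega)]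
        obtain ⟨hq1, hq2⟩ := hrk' c' hc''
        constructor
        · rw [hreb, rankF, hopen, hopf, ← rankF, hq1]
        · rw [hreb, hF, hopen, ← hF, hq2]
          have hfe : (avail.erase o).filter (· < c') = (avail.filter (· < c')).erase o := by
            ext x; simp only [Finset.mem_filter, Finset.mem_erase]; tauto
          have homem : o ∈ avail.filter (· < c') := Finset.mem_filter.2 ⟨hoav, holt.trans hcc'⟩
          have hcardf : ((avail.erase o).filter (· < c')).card = (avail.filter (· < c')).card - 1 := by
            rw [hfe, Finset.card_erase_of_mem homem]
          have hlst : ((c :: cs).filter (fun a => a < c')).length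
              = (cs.filter (fun a => a < c')).length + 1 := by
            rw [List.filter_cons_of_pos (by simpa using hcc')]
            simp
          have hpos : 0 < (avail.filter (· < c')).card := Finset.card_pos.2 ⟨o, homem⟩
          rw [hcardf, hlst]
          omega

lemma sort_erase_head (X : Finset ℕ) (c : ℕ) (rest : List ℕ)
    (hL : X.sort (· ≤ ·) = c :: rest) : (X.erase c).sort (· ≤ ·) = rest := by
  have hperm : ((X.erase c).sort (· ≤ ·) : Multiset ℕ) = (rest : Multiset ℕ) := by
    rw [Finset.sort_eq, Finset.erase_val]
    have : (X.val : Multiset ℕ) = ((c :: rest : List ℕ) : Multiset ℕ) := by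
      rw [← Finset.sort_eq X (· ≤ ·), hL]
    rw [this]
    simp [Multiset.erase_cons_head]
  have hperm' : ((X.erase c).sort (· ≤ ·)).Perm rest := Quotient.exact hperm
  apply List.Perm.eq_of_pairwise' (Finset.pairwise_sort _ _) ?_ hperm'
  have := Finset.pairwise_sort X (· ≤ ·)
  rw [hL] at this
  exact (List.pairwise_cons.1 this).2

lemma rebuild_eq (n : ℕ) : ∀ (s : Finset (ℕ × ℕ)), s.card = n → PM s → ∀ (r : ℕ → ℕ),
    (∀ c ∈ closersF s, r c = rankF s c) →
    rebuild ((closersF s).sort (· ≤ ·)) r (openersF s) = s := by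
  induction n with
  | zero =>
    intro s hcard _ r _
    have hs : s = ∅ := Finset.card_eq_zero.1 hcard
    subst hs
    simp [closersF, openersF, rebuild]
  | succ n ihn =>
    intro s hcard h r hr
    have hcl : (closersF s).card = s.card :=
      Finset.card_image_of_injOn (fun x hx y hy hxy => h.injSnd x hx y hy hxy)
    have hlen : ((closersF s).sort (· ≤ ·)).length = n + 1 := by
      rw [Finset.length_sort, hcl, hcard]
    obtain ⟨c, rest, hL⟩ : ∃ c rest, (closersF s).sort (· ≤ ·) = c :: rest := by
      cases hLl : (closersF s).sort (· ≤ ·) with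
      | nil => rw [hLl] at hlen; simp at hlen
      | cons a as => exact ⟨a, as, rfl⟩
    have hcmem : c ∈ closersF s := by
      have : c ∈ (closersF s).sort (· ≤ ·) := by rw [hL]; exact List.mem_cons_self
      exact (Finset.mem_sort _).1 this
    obtain ⟨e, he, hec⟩ := Finset.mem_image.1 hcmem
    -- c is the minimum closer
    have hmin : ∀ f ∈ s, c ≤ f.2 := by
      intro f hf
      have : f.2 ∈ (closersF s).sort (· ≤ ·) :=
        (Finset.mem_sort _).2 (Finset.mem_image_of_mem Prod.snd hf)
      rw [hL] at this
      rcases List.mem_cons.1 this with h1 | h1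
      · omega
      · have hsorted := Finset.pairwise_sort (closersF s) (· ≤ ·)
        rw [hL] at hsorted
        exact (List.pairwise_cons.1 hsorted).1 _ h1
    have hstrict : ∀ f ∈ s, f.2 ≠ c → c < f.2 := fun f hf hne =>
      lt_of_le_of_ne (hmin f hf) (Ne.symm hne)
    set o := e.1 with hoe
    have holt : o < c := hec ▸ h.lt e he
    have hoav : o ∈ openersF s := Finset.mem_image_of_mem Prod.fst he
    -- openAt s c = A
    have hA : openAt s c = (openersF s).filter (· < c) := by
      ext a
      rw [openAt]
      simp only [Finset.mem_image, Finset.mem_filter, openersF]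
      constructor
      · rintro ⟨f, ⟨hfs, hlt, _⟩, rfl⟩
        exact ⟨⟨f, hfs, rfl⟩, hlt⟩
      · rintro ⟨⟨f, hf, rfl⟩, hlt⟩
        exact ⟨f, ⟨hf, hlt, hmin f hf⟩, rfl⟩
    have hoA : o ∈ (openersF s).filter (· < c) := Finset.mem_filter.2 ⟨hoav, holt⟩
    have hpick : pick ((openersF s).filter (· < c)) (r c) = o := by
      have hrc : r c = rankF s c := hr c hcmem
      have hopf : opFn s c = o := by rw [← hec]; exact opFn_eq h he
      rw [hrc, rankF, hopf, hA]
      exact pick_of_rank _ o hoA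
    -- the erase step
    set s' := s.erase e with hs'
    have hsub : s' ⊆ s := Finset.erase_subset e s
    have hPM' : PM s' := PM.mono hsub h
    have hopeners' : openersF s' = (openersF s).erase o := by
      ext a
      simp only [openersF, Finset.mem_image, Finset.mem_erase, hs']
      constructor
      · rintro ⟨f, ⟨hfe, hfs⟩, rfl⟩
        exact ⟨fun hao => hfe (h.injFst f hfs e he hao), f, hfs, rfl⟩
      · rintro ⟨hne, f, hf, rfl⟩
        exact ⟨f, ⟨fun hfe => hne (by rw [hfe]), hf⟩, rfl⟩
    have hclosers' : closersF s' = (closersF s).erase c := by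
      ext a
      simp only [closersF, Finset.mem_image, Finset.mem_erase, hs']
      constructor
      · rintro ⟨f, ⟨hfe, hfs⟩, rfl⟩
        exact ⟨fun hac => hfe (h.injSnd f hfs e he (hac.trans hec.symm)), f, hfs, rfl⟩
      · rintro ⟨hne, f, hf, rfl⟩
        exact ⟨f, ⟨fun hfe => hne (by rw [hfe, hec]), hf⟩, rfl⟩
    have hsort' : (closersF s').sort (· ≤ ·) = rest := by
      rw [hclosers']; exact sort_erase_head _ _ _ hL
    have hcard' : s'.card = n := by
      rw [hs', Finset.card_erase_of_mem he, hcard]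
      omega
    have hopenAt' : ∀ c' ∈ closersF s', openAt s' c' = openAt s c' := by
      intro c' hc'
      obtain ⟨hnec, hmem⟩ := Finset.mem_erase.1 (hclosers' ▸ hc')
      have hcc' : c < c' := by
        obtain ⟨f, hf, rfl⟩ := Finset.mem_image.1 hmem
        exact hstrict f hf hnec
      rw [openAt, openAt, hs', Finset.filter_erase]
      rw [Finset.erase_eq_of_notMem]
      intro hmem
      have := (Finset.mem_filter.1 hmem).2.2
      rw [hec] at this
      omega
    have hopFn' : ∀ c' ∈ closersF s', opFn s' c' = opFn s c' := by
      intro c' hc'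
      obtain ⟨hnec, _⟩ := Finset.mem_erase.1 (hclosers' ▸ hc')
      rw [opFn, opFn, hs', Finset.filter_erase, Finset.erase_eq_of_notMem]
      intro hmem
      exact hnec ((Finset.mem_filter.1 hmem).2 ▸ hec ▸ rfl : c' = c)
    have hr' : ∀ c' ∈ closersF s', r c' = rankF s' c' := by
      intro c' hc'
      have h1 : c' ∈ closersF s := Finset.mem_of_mem_erase (hclosers' ▸ hc')
      rw [hr c' h1, rankF, rankF, hopenAt' c' hc', hopFn' c' hc']
    have hIH := ihn s' hcard' hPM' r hr'
    rw [hsort', hopeners'] at hIH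
    rw [hL]
    show insert (pick ((openersF s).filter (· < c)) (r c), c)
        (rebuild rest r ((openersF s).erase (pick ((openersF s).filter (· < c)) (r c)))) = s
    have hoc : (o, c) = e := by rw [← hec]
    rw [hpick, hIH, hoc, Finset.insert_erase he]

lemma matching_pm {n : ℕ} {s : Finset (ℕ × ℕ)} (hm : IsMatching n s) : PM s := by
  obtain ⟨hcard, hedge, huniq⟩ := hm
  have huse : ∀ e ∈ s, ∀ f ∈ s, ∀ v, (v = e.1 ∨ v = e.2) → (v = f.1 ∨ v = f.2) → e = f := by
    intro e he f hf v hv1 hv2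
    have hb1 : 1 ≤ v ∧ v ≤ 2 * n := by
      obtain ⟨l1, l2, l3⟩ := hedge e he
      rcases hv1 with rfl | rfl
      · exact ⟨l2, by omega⟩
      · exact ⟨by omega, l3⟩
    obtain ⟨g, _, hg⟩ := huniq v hb1.1 hb1.2
    rw [hg e ⟨he, hv1⟩, hg f ⟨hf, hv2⟩]
  constructor
  · exact fun e he => (hedge e he).1
  · exact fun e he f hf hef => huse e he f hf e.1 (Or.inl rfl) (Or.inl hef)
  · exact fun e he f hf hef => huse e he f hf e.2 (Or.inr rfl) (Or.inr hef)
  · intro e he f hf hef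
    have := huse e he f hf e.1 (Or.inl rfl) (Or.inr hef)
    subst this
    exact absurd hef (Nat.ne_of_lt ((hedge e he).1))

def flipM (s : Finset (ℕ × ℕ)) : Finset (ℕ × ℕ) :=
  rebuild ((closersF s).sort (· ≤ ·)) (fun c => hF s c + 1 - rankF s c) (openersF s)

lemma flip_spec {n : ℕ} {s : Finset (ℕ × ℕ)} (hm : IsMatching n s) :
    IsMatching n (flipM s) ∧ crStat (flipM s) = neStat s ∧ neStat (flipM s) = crStat s ∧
      flipM (flipM s) = s := by
  have h : PM s := matching_pm hm
  obtain ⟨hcard, hedge, huniq⟩ := hm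
  set cs := (closersF s).sort (· ≤ ·) with hcs
  set r' : ℕ → ℕ := fun c => hF s c + 1 - rankF s c with hr'
  have hinjF : ∀ x ∈ s, ∀ y ∈ s, x.1 = y.1 → x = y := h.injFst
  have hinjS : ∀ x ∈ s, ∀ y ∈ s, x.2 = y.2 → x = y := h.injSnd
  have hcardO : (openersF s).card = s.card :=
    Finset.card_image_of_injOn (fun x hx y hy hxy => h.injFst x hx y hy hxy)
  have hcardC : (closersF s).card = s.card :=
    Finset.card_image_of_injOn (fun x hx y hy hxy => h.injSnd x hx y hy hxy)
  have hlen : (openersF s).card = cs.length := by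
    rw [hcs, Finset.length_sort, hcardO, hcardC]
  have hdisjOC : ∀ a, a ∈ openersF s → a ∈ closersF s → False := by
    intro a ha1 ha2
    obtain ⟨e, he, rfl⟩ := Finset.mem_image.1 ha1
    obtain ⟨f, hf, hfa⟩ := Finset.mem_image.1 ha2
    exact h.cross e he f hf hfa.symm
  have hdisj : ∀ a ∈ openersF s, a ∉ cs := by
    intro a ha hacs
    exact hdisjOC a ha ((Finset.mem_sort _).1 hacs)
  -- rank bounds at each closer
  have hrb : ∀ c ∈ closersF s, 1 ≤ rankF s c ∧ rankF s c ≤ hF s c := by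
    intro c hc
    obtain ⟨e, he, rfl⟩ := Finset.mem_image.1 hc
    exact ⟨rankF_pos h he, rankF_le _⟩
  have hlenfil : ∀ c, (cs.filter (fun a => a < c)).length = ((closersF s).filter (· < c)).card := by
    intro c
    rw [hcs, card_filter_eq_length_filter]
  have hbnd : ∀ c ∈ cs, 1 ≤ r' c ∧
      r' c + (cs.filter (fun a => a < c)).length ≤ ((openersF s).filter (· < c)).card := by
    intro c hc
    have hcc : c ∈ closersF s := (Finset.mem_sort _).1 hc
    obtain ⟨hb1, hb2⟩ := hrb c hcc
    have hci := count_identity h c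
    rw [hlenfil c, hr']
    constructor
    · simp only []
      omega
    · simp only []
      omega
  obtain ⟨hPMt, himgF, himgS, hrk⟩ := rebuild_spec cs r' (openersF s)
    (Finset.sortedLT_sort _).pairwise hlen hdisj hbnd
  set t := rebuild cs r' (openersF s) with ht
  have htf : flipM s = t := rfl
  have hclt : closersF t = closersF s := by
    rw [closersF, himgS, hcs, Finset.sort_toFinset]
  have hopt : openersF t = openersF s := by rw [openersF, himgF]
  have hcardt : t.card = n := by
    have : (openersF t).card = t.card :=
      Finset.card_image_of_injOn (fun x hx y hy hxy => hPMt.injFst x hx y hy hxy)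
    rw [hopt, hcardO, hcard] at this
    omega
  -- pointwise statistics on t
  have hstat : ∀ c ∈ closersF s, hF t c = hF s c ∧ rankF t c = r' c := by
    intro c hc
    have hccs : c ∈ cs := (Finset.mem_sort _).2 hc
    obtain ⟨hq1, hq2⟩ := hrk c hccs
    have hci := count_identity h c
    rw [hlenfil c] at hq2
    exact ⟨by omega, hq1⟩
  -- membership bounds
  have hopmem : ∀ a ∈ openersF s, 1 ≤ a := by
    intro a ha
    obtain ⟨e, he, rfl⟩ := Finset.mem_image.1 ha
    exact (hedge e he).2.1
  have hclmem : ∀ a ∈ closersF s, a ≤ 2 * n := by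
    intro a ha
    obtain ⟨e, he, rfl⟩ := Finset.mem_image.1 ha
    exact (hedge e he).2.2
  have hmt : IsMatching n t := by
    refine ⟨hcardt, ?_, ?_⟩
    · intro e het
      refine ⟨hPMt.lt e het, ?_, ?_⟩
      · exact hopmem e.1 (hopt ▸ Finset.mem_image_of_mem Prod.fst het)
      · exact hclmem e.2 (hclt ▸ Finset.mem_image_of_mem Prod.snd het)
    · intro v hv1 hv2
      obtain ⟨f, ⟨hfs, hfv⟩, _⟩ := huniq v hv1 hv2
      have hvin : v ∈ openersF s ∨ v ∈ closersF s := by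
        rcases hfv with rfl | rfl
        · exact Or.inl (Finset.mem_image_of_mem Prod.fst hfs)
        · exact Or.inr (Finset.mem_image_of_mem Prod.snd hfs)
      rcases hvin with hvo | hvc
      · obtain ⟨e, het, hev⟩ := Finset.mem_image.1 (hopt.symm ▸ hvo)
        refine ⟨e, ⟨het, Or.inl hev.symm⟩, ?_⟩
        rintro g ⟨hgt, rfl | hgv⟩
        · exact hPMt.injFst g hgt e het hev.symm
        · exact absurd (hdisjOC v hvo (hclt ▸ (hgv ▸ Finset.mem_image_of_mem Prod.snd hgt))) id
      · obtain ⟨e, het, hev⟩ := Finset.mem_image.1 (hclt.symm ▸ hvc)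
        refine ⟨e, ⟨het, Or.inr hev.symm⟩, ?_⟩
        rintro g ⟨hgt, hgv | rfl⟩
        · exact absurd (hdisjOC v (hopt ▸ (hgv ▸ Finset.mem_image_of_mem Prod.fst hgt)) hvc) id
        · exact hPMt.injSnd g hgt e het hev.symm
  -- statistics
  have hsumt : ∀ g : ℕ → ℕ, ∑ c ∈ closersF s, g c = ∑ e ∈ t, g e.2 := by
    intro g
    rw [← hclt, closersF]
    exact Finset.sum_image (g := Prod.snd) (f := g) (fun x hx y hy hxy => hPMt.injSnd x hx y hy hxy)
  have hsums : ∀ g : ℕ → ℕ, ∑ c ∈ closersF s, g c = ∑ e ∈ s, g e.2 := by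
    intro g
    rw [closersF]
    exact Finset.sum_image (g := Prod.snd) (f := g) (fun x hx y hy hxy => h.injSnd x hx y hy hxy)
  have hcr : crStat t = neStat s := by
    rw [crStat_eq_sum hPMt, neStat_eq_sum h,
      ← hsumt (fun c => hF t c - rankF t c), ← hsums (fun c => rankF s c - 1)]
    refine Finset.sum_congr rfl fun c hc => ?_
    obtain ⟨e1, e2⟩ := hstat c hc
    obtain ⟨b1, b2⟩ := hrb c hc
    show hF t c - rankF t c = rankF s c - 1
    rw [e1, e2]
    simp only [hr']
    omega
  have hne : neStat t = crStat s := by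
    rw [neStat_eq_sum hPMt, crStat_eq_sum h,
      ← hsumt (fun c => rankF t c - 1), ← hsums (fun c => hF s c - rankF s c)]
    refine Finset.sum_congr rfl fun c hc => ?_
    obtain ⟨e1, e2⟩ := hstat c hc
    obtain ⟨b1, b2⟩ := hrb c hc
    show rankF t c - 1 = hF s c - rankF s c
    rw [e2]
    simp only [hr']
    omega
  -- involution
  have hinv : flipM t = s := by
    rw [flipM, hclt, hopt, ← hcs]
    have := rebuild_eq s.card s rfl h (fun c => hF t c + 1 - rankF t c) ?_
    · rw [← hcs] at this
      exact this
    · intro c hc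
      obtain ⟨e1, e2⟩ := hstat c hc
      obtain ⟨b1, b2⟩ := hrb c hc
      show hF t c + 1 - rankF t c = rankF s c
      rw [e1, e2]
      simp only [hr']
      omega
  exact ⟨hmt, hcr, hne, htf ▸ hinv⟩

end FlipAux

/-- symmetry of the joint statistic: for every `k, l ≥ 0` and `n ≥ 1`, there are
as many matchings on `[2n]` with `k` crossings and `l` nestings as those with `l` crossings
and `k` nestings. -/


theorem card_joint_statistic_symmetric (k l n : ℕ) (hn : 1 ≤ n) :
    Nat.card {s : Finset (ℕ × ℕ) // IsMatching n s ∧ crStat s = k ∧ neStat s = l}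
      = Nat.card {s : Finset (ℕ × ℕ) // IsMatching n s ∧ crStat s = l ∧ neStat s = k} := by
  refine Nat.card_congr
    { toFun := fun x => ⟨flipM x.1, (flip_spec x.2.1).1,
        by rw [(flip_spec x.2.1).2.1, x.2.2.2], by rw [(flip_spec x.2.1).2.2.1, x.2.2.1]⟩,
      invFun := fun x => ⟨flipM x.1, (flip_spec x.2.1).1,
        by rw [(flip_spec x.2.1).2.1, x.2.2.2], by rw [(flip_spec x.2.1).2.2.1, x.2.2.1]⟩,
      left_inv := fun x => Subtype.ext (flip_spec x.2.1).2.2.2,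
      right_inv := fun x => Subtype.ext (flip_spec x.2.1).2.2.2 }
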